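/- Let α ∈ (0,1) be irrational and let n have k_0(n) = L. Let ∥·∥* be the one-sided distance with ∥nα∥* = ‖nα‖. Then ∥nα∥* = min{ ∥xα∥* : n − q_L < x < n + q_L, x ∈ ℤ }, i.e., n minimizes the one-sided distance of xα to ℤ among all integers within distance less than q_L of n. -/

import Mathlib

set_option linter.unusedSectionVars false
set_option maxHeartbeats 1000000


/-- Gauss-map iterates of `α`. -/
noncomputable def cfFrac (α : ℝ) : ℕ → ℝ
  | 0 => α
  | k + 1 => Int.fract (1 / cfFrac α k)

/-- Partial quotients of `α` (1-indexed, `cfA α 0 = 0` unused). -/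
noncomputable def cfA (α : ℝ) : ℕ → ℕ
  | 0 => 0
  | k + 1 => (⌊1 / cfFrac α k⌋).toNat

/-- Numerators of the convergents of `α`. -/
noncomputable def cfP (α : ℝ) : ℕ → ℕ
  | 0 => 0
  | 1 => 1
  | k + 2 => cfA α (k + 2) * cfP α (k + 1) + cfP α k

/-- Denominators of the convergents of `α`. -/
noncomputable def cfQ (α : ℝ) : ℕ → ℕ
  | 0 => 1
  | 1 => cfA α 1
  | k + 2 => cfA α (k + 2) * cfQ α (k + 1) + cfQ α k

/-- Distance from `x` to the nearest integer. -/
noncomputable def distNearInt (x : ℝ) : ℝ := min (Int.fract x) (1 - Int.fract x)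

/-- auxiliary: `q_k α - p_k`. -/
noncomputable def cfT (α : ℝ) (k : ℕ) : ℝ := (cfQ α k : ℝ) * α - (cfP α k : ℝ)

/-- auxiliary: `β_0 β_1 ⋯ β_k`. -/
noncomputable def cfD (α : ℝ) (k : ℕ) : ℝ := ∏ i ∈ Finset.range (k + 1), cfFrac α i

section basic
variable {α : ℝ} (hα : α ∈ Set.Ioo (0:ℝ) 1) (hirr : Irrational α)
include hα hirr

lemma cfFrac_prop : ∀ k, (cfFrac α k ∈ Set.Ioo (0:ℝ) 1) ∧ Irrational (cfFrac α k) := by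
  intro k
  induction k with
  | zero => exact ⟨hα, hirr⟩
  | succ k ih =>
    obtain ⟨⟨h0, h1⟩, hi⟩ := ih
    have hfr : Irrational (Int.fract (1 / cfFrac α k)) := by
      rw [Int.fract]
      exact (show Irrational (1 / cfFrac α k) from (one_div (cfFrac α k)) ▸ hi.inv).sub_intCast _
    have hk1 : cfFrac α (k+1) = Int.fract (1 / cfFrac α k) := rfl
    refine ⟨⟨?_, ?_⟩, hk1 ▸ hfr⟩
    · rw [hk1]
      rcases (Int.fract_nonneg (1 / cfFrac α k)).lt_or_eq with h | h
      · exact h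
      · exact absurd (h ▸ hfr) (by simp [Irrational])
    · rw [hk1]; exact Int.fract_lt_one _

lemma cfFrac_pos (k : ℕ) : 0 < cfFrac α k := ((cfFrac_prop hα hirr k).1).1

lemma cfFrac_lt_one (k : ℕ) : cfFrac α k < 1 := ((cfFrac_prop hα hirr k).1).2

lemma one_lt_inv_cfFrac (k : ℕ) : 1 < 1 / cfFrac α k :=
  one_lt_one_div (cfFrac_pos hα hirr k) (cfFrac_lt_one hα hirr k)

lemma one_le_floor (k : ℕ) : 1 ≤ ⌊1 / cfFrac α k⌋ := by
  rw [Int.le_floor]; exact_mod_cast (one_lt_inv_cfFrac hα hirr k).le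

lemma cfA_cast (k : ℕ) : (cfA α (k+1) : ℝ) = (⌊1 / cfFrac α k⌋ : ℤ) := by
  have h := one_le_floor hα hirr k
  have h2 : ((⌊1 / cfFrac α k⌋).toNat : ℤ) = ⌊1 / cfFrac α k⌋ := Int.toNat_of_nonneg (by omega)
  rw [show cfA α (k+1) = (⌊1 / cfFrac α k⌋).toNat from rfl]
  exact_mod_cast congrArg (fun z : ℤ => (z : ℝ)) h2

lemma one_le_cfA (k : ℕ) : 1 ≤ cfA α (k+1) := by
  have h := one_le_floor hα hirr k
  rw [show cfA α (k+1) = (⌊1 / cfFrac α k⌋).toNat from rfl]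
  omega

lemma cfFrac_succ_eq (k : ℕ) :
    cfFrac α (k+1) = 1 / cfFrac α k - (cfA α (k+1) : ℝ) := by
  rw [show cfFrac α (k+1) = Int.fract (1 / cfFrac α k) from rfl, Int.fract,
    cfA_cast hα hirr k]

lemma one_le_cfQ : ∀ k, 1 ≤ cfQ α k := by
  have key : ∀ k, 1 ≤ cfQ α k ∧ 1 ≤ cfQ α (k+1) := by
    intro k
    induction k with
    | zero => exact ⟨le_refl _, by simpa [cfQ] using one_le_cfA hα hirr 0⟩
    | succ k ih =>
      obtain ⟨ih1, ih2⟩ := ih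
      refine ⟨ih2, ?_⟩
      show 1 ≤ cfQ α (k+2)
      have h1 : cfQ α (k+2) = cfA α (k+2) * cfQ α (k+1) + cfQ α k := rfl
      have h2 : cfQ α k ≤ cfQ α (k+2) := by rw [h1]; exact Nat.le_add_left _ _
      omega
  exact fun k => (key k).1
end basic

section theta
variable {α : ℝ} (hα : α ∈ Set.Ioo (0:ℝ) 1) (hirr : Irrational α)
include hα hirr

lemma cfT_rec (k : ℕ) :
    cfT α (k+2) = (cfA α (k+2) : ℝ) * cfT α (k+1) + cfT α k := by
  have hq : cfQ α (k+2) = cfA α (k+2) * cfQ α (k+1) + cfQ α k := rfl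
  have hp : cfP α (k+2) = cfA α (k+2) * cfP α (k+1) + cfP α k := rfl
  simp only [cfT, hq, hp]
  push_cast
  ring

lemma cfT_succ : ∀ k, cfT α (k+1) = -(cfFrac α (k+1)) * cfT α k := by
  intro k
  induction k with
  | zero =>
    have h1 : cfFrac α 1 = 1/α - (cfA α 1 : ℝ) := by
      simpa [show cfFrac α 0 = α from rfl] using cfFrac_succ_eq hα hirr 0
    have hα0 : α ≠ 0 := ne_of_gt hα.1
    simp only [cfT, h1]
    show (cfQ α 1 : ℝ) * α - (cfP α 1 : ℝ) = -(1/α - (cfA α 1 : ℝ)) * ((cfQ α 0 : ℝ) * α - (cfP α 0 : ℝ))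
    rw [show cfQ α 1 = cfA α 1 from rfl, show cfP α 1 = 1 from rfl,
      show cfQ α 0 = 1 from rfl, show cfP α 0 = 0 from rfl]
    push_cast
    field_simp
    ring
  | succ k ih =>
    have hβ : cfFrac α (k+1) ≠ 0 := ne_of_gt (cfFrac_pos hα hirr (k+1))
    have h3 : cfFrac α (k+2) = 1 / cfFrac α (k+1) - (cfA α (k+2) : ℝ) :=
      cfFrac_succ_eq hα hirr (k+1)
    have hk : cfT α k = -(cfT α (k+1)) / cfFrac α (k+1) := by
      rw [ih]; field_simp
    rw [cfT_rec hα hirr k, h3, hk]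
    field_simp
    ring

lemma cfD_pos (k : ℕ) : 0 < cfD α k :=
  Finset.prod_pos fun i _ => cfFrac_pos hα hirr i

lemma cfD_succ (k : ℕ) : cfD α (k+1) = cfFrac α (k+1) * cfD α k := by
  rw [cfD, Finset.prod_range_succ, mul_comm]; rfl

lemma cfD_succ_le (k : ℕ) : cfD α (k+1) ≤ cfD α k := by
  rw [cfD_succ hα hirr]
  nlinarith [cfD_pos hα hirr k, cfFrac_pos hα hirr (k+1), cfFrac_lt_one hα hirr (k+1)]

lemma cfT_eq : ∀ k, cfT α k = (-1)^k * cfD α k := by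
  intro k
  induction k with
  | zero =>
    show (cfQ α 0 : ℝ) * α - (cfP α 0 : ℝ) = (-1)^0 * ∏ i ∈ Finset.range 1, cfFrac α i
    rw [show cfQ α 0 = 1 from rfl, show cfP α 0 = 0 from rfl, Finset.prod_range_one]
    rw [show cfFrac α 0 = α from rfl]
    push_cast
    ring
  | succ k ih =>
    rw [cfT_succ hα hirr k, ih, cfD_succ hα hirr, pow_succ]
    ring

lemma abs_cfT (k : ℕ) : |cfT α k| = cfD α k := by
  rw [cfT_eq hα hirr, abs_mul, abs_pow, abs_neg, abs_one, one_pow, one_mul,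
    abs_of_pos (cfD_pos hα hirr k)]

lemma cfD_ident (k : ℕ) :
    cfD α k = (cfA α (k+2) : ℝ) * cfD α (k+1) + cfD α (k+2) := by
  have h := cfT_rec hα hirr k
  rw [cfT_eq hα hirr, cfT_eq hα hirr, cfT_eq hα hirr] at h
  have ht : ((-1:ℝ))^k ≠ 0 := pow_ne_zero _ (by norm_num)
  have h2 : (-1:ℝ)^k * (cfD α k - (cfA α (k+2) : ℝ) * cfD α (k+1) - cfD α (k+2)) = 0 := by
    linear_combination -h
  rcases mul_eq_zero.1 h2 with h3 | h3
  · exact absurd h3 ht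
  · linarith

lemma cfDet : ∀ k, (cfP α (k+1) : ℤ) * (cfQ α k : ℤ) - (cfP α k : ℤ) * (cfQ α (k+1) : ℤ) = (-1)^k := by
  intro k
  induction k with
  | zero =>
    rw [show cfP α 1 = 1 from rfl, show cfQ α 0 = 1 from rfl, show cfP α 0 = 0 from rfl]
    norm_num
  | succ k ih =>
    have hq : cfQ α (k+2) = cfA α (k+2) * cfQ α (k+1) + cfQ α k := rfl
    have hp : cfP α (k+2) = cfA α (k+2) * cfP α (k+1) + cfP α k := rfl
    rw [hq, hp]
    push_cast
    push_cast at ih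
    linear_combination (-1 : ℤ) * ih

end theta

lemma abs_le_abs_add' {R : Type*} [CommRing R] [LinearOrder R] [IsStrictOrderedRing R] (a b : R) (h : 0 ≤ a * b) :
    |a| ≤ |a + b| := sq_le_sq.1 (by nlinarith [sq_nonneg b])

lemma distNearInt_nonneg (y : ℝ) : 0 ≤ distNearInt y :=
  le_min (Int.fract_nonneg y) (by linarith [Int.fract_lt_one y])

lemma distNearInt_add_int (y : ℝ) (k : ℤ) : distNearInt (y + k) = distNearInt y := by
  simp [distNearInt, Int.fract_add_intCast]

lemma distNearInt_le_abs (y : ℝ) : distNearInt y ≤ |y| := by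
  have h0 := Int.fract_nonneg y
  have h1 := Int.fract_lt_one y
  rcases le_or_gt (1/2 : ℝ) |y| with h | h
  · calc distNearInt y ≤ (Int.fract y + (1 - Int.fract y))/2 := by
          rcases le_total (Int.fract y) (1 - Int.fract y) with h2 | h2
          · rw [distNearInt, min_eq_left h2]; linarith
          · rw [distNearInt, min_eq_right h2]; linarith
      _ ≤ |y| := by norm_num [h]
  · rcases le_or_gt 0 y with hy | hy
    · have : Int.fract y = y := Int.fract_eq_self.2 ⟨hy, by rw [abs_of_nonneg hy] at h; linarith⟩
      rw [distNearInt, this, abs_of_nonneg hy]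
      exact min_le_left _ _
    · have hfl : ⌊y⌋ = -1 := by
        rw [abs_of_neg hy] at h
        rw [Int.floor_eq_iff] <;> push_cast <;> constructor <;> linarith
      have hy1 : Int.fract y = y + 1 := by
        rw [Int.fract, hfl]; push_cast; ring
      rw [distNearInt, hy1, abs_of_neg hy]
      calc min (y+1) (1 - (y+1)) ≤ 1 - (y+1) := min_le_right _ _
        _ = -y := by ring

lemma dni_sub_le (y z : ℝ) : distNearInt (y - z) ≤ |Int.fract y - Int.fract z| := by
  have hyz : y - z = (Int.fract y - Int.fract z) + ((⌊y⌋ - ⌊z⌋ : ℤ) : ℝ) := by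
    rw [Int.fract, Int.fract]; push_cast; ring
  rw [hyz, distNearInt_add_int]
  exact distNearInt_le_abs _

lemma Irrational.fract_pos {y : ℝ} (h : Irrational y) : 0 < Int.fract y := by
  rcases (Int.fract_nonneg y).lt_or_eq with h1 | h1
  · exact h1
  · exfalso
    apply h.ne_int ⌊y⌋
    have := Int.self_sub_fract y
    rw [← h1] at this
    linarith

section bestapprox
variable {α : ℝ} (hα : α ∈ Set.Ioo (0:ℝ) 1) (hirr : Irrational α)
include hα hirr

lemma bestApprox (l : ℕ) (m : ℤ) (hm0 : m ≠ 0) (hm : |m| < (cfQ α (l+1) : ℤ)) (p : ℤ) :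
    cfD α l ≤ |(m:ℝ) * α - (p:ℝ)| := by
  set P0 : ℤ := (cfP α l : ℤ) with hP0
  set P1 : ℤ := (cfP α (l+1) : ℤ) with hP1
  set Q0 : ℤ := (cfQ α l : ℤ) with hQ0
  set Q1 : ℤ := (cfQ α (l+1) : ℤ) with hQ1
  have hdet : P1 * Q0 - P0 * Q1 = (-1)^l := cfDet hα hirr l
  set e : ℤ := (-1)^l with he
  have he2 : e * e = 1 := by
    rw [he, ← pow_add]
    exact Even.neg_one_pow ⟨l, rfl⟩
  obtain ⟨u, hu_def⟩ : ∃ u : ℤ, u = e * (m * P1 - p * Q1) := ⟨_, rfl⟩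
  obtain ⟨v, hv_def⟩ : ∃ v : ℤ, v = e * (Q0 * p - P0 * m) := ⟨_, rfl⟩
  have hu : u * Q0 + v * Q1 = m := by
    rw [hu_def, hv_def]
    linear_combination (e * m) * hdet + m * he2
  have hp : u * P0 + v * P1 = p := by
    rw [hu_def, hv_def]
    linear_combination (e * p) * hdet + p * he2
  have hQ0nn : (0:ℤ) ≤ Q0 := by rw [hQ0]; positivity
  have hQ1pos : (1:ℤ) ≤ Q1 := by rw [hQ1]; exact_mod_cast one_le_cfQ hα hirr (l+1)
  have huR : (u:ℝ) * (Q0:ℝ) + (v:ℝ) * (Q1:ℝ) = (m:ℝ) := by exact_mod_cast congrArg (fun z : ℤ => (z:ℝ)) hu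
  have hpR : (u:ℝ) * (P0:ℝ) + (v:ℝ) * (P1:ℝ) = (p:ℝ) := by exact_mod_cast congrArg (fun z : ℤ => (z:ℝ)) hp
  have hreal : (m:ℝ) * α - (p:ℝ) = (u:ℝ) * cfT α l + (v:ℝ) * cfT α (l+1) := by
    simp only [cfT, hP0, hP1, hQ0, hQ1] at *
    push_cast at huR hpR ⊢
    linear_combination hpR - α * huR
  by_cases hu0 : u = 0
  · exfalso
    rw [hu0, zero_mul, zero_add] at hu
    have hv0 : v ≠ 0 := by rintro rfl; simp at hu; omega
    have h1 : (1:ℤ) ≤ |v| := Int.one_le_abs hv0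
    have : Q1 ≤ |m| := by
      rw [← hu, abs_mul, abs_of_nonneg (by omega : (0:ℤ) ≤ Q1)]
      nlinarith
    omega
  · have hu1 : (1:ℤ) ≤ |u| := Int.one_le_abs hu0
    rcases le_or_gt (u * v) 0 with huv | huv
    · -- opposite signs: |u θ_l| ≤ |u θ_l + v θ_{l+1}|
      have hθθ : cfT α l * cfT α (l+1) = -(cfD α l * cfD α (l+1)) := by
        rw [cfT_eq hα hirr, cfT_eq hα hirr]
        have h : ((-1:ℝ))^l * (-1)^(l+1) = -1 := by
          rw [← pow_add]
          exact Odd.neg_one_pow ⟨l, by ring⟩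
        calc ((-1:ℝ))^l * cfD α l * ((-1)^(l+1) * cfD α (l+1))
            = ((-1:ℝ))^l * (-1)^(l+1) * (cfD α l * cfD α (l+1)) := by ring
          _ = -(cfD α l * cfD α (l+1)) := by rw [h]; ring
      have hsame : 0 ≤ ((u:ℝ) * cfT α l) * ((v:ℝ) * cfT α (l+1)) := by
        have huvR : ((u:ℝ) * (v:ℝ)) ≤ 0 := by exact_mod_cast huv
        calc (0:ℝ) ≤ (-((u:ℝ) * (v:ℝ))) * (cfD α l * cfD α (l+1)) :=
              mul_nonneg (by linarith) (mul_nonneg (cfD_pos hα hirr l).le (cfD_pos hα hirr (l+1)).le)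
          _ = ((u:ℝ) * (v:ℝ)) * (cfT α l * cfT α (l+1)) := by rw [hθθ]; ring
          _ = ((u:ℝ) * cfT α l) * ((v:ℝ) * cfT α (l+1)) := by ring
      have h1 : |(u:ℝ) * cfT α l| ≤ |(u:ℝ) * cfT α l + (v:ℝ) * cfT α (l+1)| :=
        abs_le_abs_add' _ _ hsame
      have h2 : cfD α l ≤ |(u:ℝ) * cfT α l| := by
        rw [abs_mul, abs_cfT hα hirr]
        have hu1R : (1:ℝ) ≤ |(u:ℝ)| := by
          rw [← Int.cast_abs]; exact_mod_cast hu1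
        nlinarith [cfD_pos hα hirr l]
      rw [hreal]
      linarith
    · -- same signs: |m| ≥ Q1, contradiction
      exfalso
      have hsame : (0:ℤ) ≤ (v * Q1) * (u * Q0) := by
        calc (0:ℤ) ≤ (u * v) * (Q1 * Q0) := mul_nonneg huv.le (mul_nonneg (by omega) hQ0nn)
          _ = (v * Q1) * (u * Q0) := by ring
      have h1 : |v * Q1| ≤ |v * Q1 + u * Q0| := abs_le_abs_add' _ _ hsame
      have hv0 : v ≠ 0 := by rintro rfl; simp at huv
      have hv1 : (1:ℤ) ≤ |v| := Int.one_le_abs hv0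
      have h2 : Q1 ≤ |v * Q1| := by
        rw [abs_mul, abs_of_nonneg (by omega : (0:ℤ) ≤ Q1)]
        nlinarith [mul_nonneg (by omega : (0:ℤ) ≤ |v| - 1) (by omega : (0:ℤ) ≤ Q1)]
      have h3 : v * Q1 + u * Q0 = m := by linarith [hu]
      rw [h3] at h1
      omega

end bestapprox

/-- `b` is the sequence of digits of an Ostrowski representation of `n` w.r.t. `α`:
`n = Σ b_k q_k` with `0 ≤ b_0 ≤ a_1 - 1`, `0 ≤ b_k ≤ a_{k+1}` for `k ≥ 1`, and
`b_{k-1} = 0` whenever `b_k = a_{k+1}`. -/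
def OstrowskiRep (α : ℝ) (n : ℕ) (b : ℕ → ℕ) : Prop :=
  b 0 ≤ cfA α 1 - 1 ∧
  (∀ k, 1 ≤ k → b k ≤ cfA α (k + 1)) ∧
  (∀ k, 1 ≤ k → b k = cfA α (k + 1) → b (k - 1) = 0) ∧
  ∃ N, (∀ k, N < k → b k = 0) ∧ n = ∑ k ∈ Finset.range (N + 1), b k * cfQ α k

theorem stmt16 (α : ℝ) (hα : α ∈ Set.Ioo (0:ℝ) 1) (hirr : Irrational α)
    (n : ℕ) (hn : 1 ≤ n) (b : ℕ → ℕ) (hb : OstrowskiRep α n b)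
    (L : ℕ) (hL : b L ≠ 0) (hL0 : ∀ k, k < L → b k = 0)
    (f : ℝ → ℝ) (hf : f = (fun ξ => Int.fract ξ) ∨ f = (fun ξ => Int.fract (-ξ)))
    (hfn : f ((n : ℝ) * α) = distNearInt ((n : ℝ) * α)) :
    ∀ x : ℤ, (n : ℤ) - (cfQ α L : ℤ) < x → x < (n : ℤ) + (cfQ α L : ℤ) →
      f ((n : ℝ) * α) ≤ f ((x : ℝ) * α) := by
  obtain ⟨hb0, hb1, hb2, N, hbN, hsum⟩ := hb
  intro x hx1 hx2
  -- the case `x = n` is trivial, and covers everything when `L = 0`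
  by_cases hxn : x = (n:ℤ)
  · have hxr : ((x:ℤ):ℝ) = ((n:ℕ):ℝ) := by rw [hxn]; push_cast; ring
    rw [hxr]
  rcases Nat.eq_zero_or_pos L with rfl | hLpos
  · exact absurd (by have h : (cfQ α 0 : ℤ) = 1 := rfl; omega) hxn
  obtain ⟨l, rfl⟩ : ∃ l, L = l + 1 := ⟨L - 1, by omega⟩
  have hLN : l + 1 ≤ N := by
    by_contra h
    exact hL (hbN _ (by omega))
  -- `n ≥ q_{l+1}`, hence `x ≥ 1`
  have hnq : cfQ α (l+1) ≤ n := by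
    rw [hsum]
    calc cfQ α (l+1) ≤ b (l+1) * cfQ α (l+1) :=
          Nat.le_mul_of_pos_left _ (Nat.pos_of_ne_zero hL)
      _ ≤ ∑ k ∈ Finset.range (N + 1), b k * cfQ α k :=
          Finset.single_le_sum (f := fun k => b k * cfQ α k)
            (fun i _ => Nat.zero_le _) (Finset.mem_range.2 (by omega))
  have hnqZ : (cfQ α (l+1) : ℤ) ≤ (n:ℤ) := by exact_mod_cast hnq
  have hx0 : x ≠ 0 := by omega
  have hxirr : Irrational ((x:ℝ) * α) := hirr.intCast_mul hx0
  -- the Ostrowski sum `S` and the integer part `Pn`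
  set S : ℝ := ∑ k ∈ Finset.range (N+1), (b k : ℝ) * cfT α k with hS
  set Pn : ℤ := ∑ k ∈ Finset.range (N+1), (b k : ℤ) * (cfP α k : ℤ) with hPn
  have hnα : (n:ℝ) * α = S + (Pn : ℝ) := by
    rw [hS, hPn, hsum]
    push_cast
    rw [Finset.sum_mul, ← Finset.sum_add_distrib]
    refine Finset.sum_congr rfl fun i _ => ?_
    simp only [cfT]
    ring
  -- bound on |S|
  have hsq : ∀ M : ℕ, ((-1:ℝ))^M * (-1)^M = 1 := fun M => by rw [← mul_pow]; norm_num
  have sumB : ∀ j M, 1 ≤ M → M + j = N + 1 →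
      -(cfD α M) ≤ (-1)^M * (∑ k ∈ Finset.Ico M (N+1), (b k : ℝ) * cfT α k) ∧
      (-1)^M * (∑ k ∈ Finset.Ico M (N+1), (b k : ℝ) * cfT α k)
        ≤ (cfA α (M+1) : ℝ) * cfD α M + cfD α (M+1) := by
    intro j
    induction j with
    | zero =>
      intro M hM1 hMj
      rw [show M = N+1 from by omega, Finset.Ico_self]
      have h1 := cfD_pos hα hirr (N+1)
      have h2 := cfD_pos hα hirr (N+2)
      have h3 : (0:ℝ) ≤ (cfA α (N+2) : ℝ) := Nat.cast_nonneg _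
      constructor
      · simp only [Finset.sum_empty, mul_zero]; linarith
      · simp only [Finset.sum_empty, mul_zero]
        nlinarith
    | succ j ih =>
      intro M hM1 hMj
      have hMN : M < N + 1 := by omega
      rw [Finset.sum_eq_sum_Ico_succ_bot hMN]
      obtain ⟨ih1, ih2⟩ := ih (M+1) (by omega) (by omega)
      have hident := cfD_ident hα hirr M
      have hbM : (b M : ℝ) ≤ (cfA α (M+1) : ℝ) := by exact_mod_cast hb1 M hM1
      have hDM := cfD_pos hα hirr M
      have hDM1 := cfD_pos hα hirr (M+1)
      have hbM0 : (0:ℝ) ≤ (b M : ℝ) := Nat.cast_nonneg _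
      have hT : (-1:ℝ)^M * ((b M : ℝ) * cfT α M
            + (∑ k ∈ Finset.Ico (M+1) (N+1), (b k:ℝ) * cfT α k))
          = (b M : ℝ) * cfD α M
            - (-1)^(M+1) * (∑ k ∈ Finset.Ico (M+1) (N+1), (b k:ℝ) * cfT α k) := by
        rw [cfT_eq hα hirr M]
        linear_combination ((b M : ℝ) * cfD α M) * hsq M
      rw [hT]
      have hbMD : (b M : ℝ) * cfD α M ≤ (cfA α (M+1) : ℝ) * cfD α M :=
        mul_le_mul_of_nonneg_right hbM hDM.le
      have hbMD0 : 0 ≤ (b M : ℝ) * cfD α M := mul_nonneg hbM0 hDM.le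
      constructor
      · linarith
      · linarith
  have hsplit : S = ∑ k ∈ Finset.Ico (l+1) (N+1), (b k : ℝ) * cfT α k := by
    rw [hS, Finset.range_eq_Ico,
      ← Finset.sum_Ico_consecutive _ (Nat.zero_le (l+1)) (by omega : l+1 ≤ N+1)]
    have h0 : ∑ k ∈ Finset.Ico 0 (l+1), (b k : ℝ) * cfT α k = 0 :=
      Finset.sum_eq_zero fun i hi => by
        rw [hL0 i (Finset.mem_Ico.1 hi).2]
        simp
    rw [h0, zero_add]
  have hbound : |S| ≤ cfD α l := by
    obtain ⟨h1, h2⟩ := sumB (N + 1 - (l+1)) (l+1) (by omega) (by omega)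
    rw [← hsplit] at h1 h2
    have hDident := cfD_ident hα hirr l
    have hDle := cfD_succ_le hα hirr l
    have habs : |S| = |(-1:ℝ)^(l+1) * S| := by
      rw [abs_mul, abs_pow, abs_neg, abs_one, one_pow, one_mul]
    rw [habs, abs_le]
    constructor
    · linarith
    · linarith
  -- distNearInt facts for n
  have hdn : distNearInt ((n:ℝ) * α) ≤ |S| := by
    rw [hnα, distNearInt_add_int]
    exact distNearInt_le_abs S
  by_contra hcon
  push_neg at hcon
  rcases hf with rfl | rfl
  · -- f = fract
    have hcon' : Int.fract ((x:ℝ)*α) < Int.fract ((n:ℝ)*α) := hcon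
    have hfn' : Int.fract ((n:ℝ)*α) = distNearInt ((n:ℝ)*α) := hfn
    have hfx : 0 < Int.fract ((x:ℝ)*α) := hxirr.fract_pos
    have hmlt : |(n:ℤ) - x| < (cfQ α (l+1) : ℤ) := abs_lt.2 ⟨by omega, by omega⟩
    have hm0 : (n:ℤ) - x ≠ 0 := by omega
    have h := dni_sub_le ((n:ℝ)*α) ((x:ℝ)*α)
    have he : (n:ℝ)*α - (x:ℝ)*α = ((((n:ℤ) - x : ℤ)):ℝ) * α := by push_cast; ring
    rw [he, abs_of_pos (by linarith)] at h
    have hge : cfD α l ≤ distNearInt (((((n:ℤ) - x : ℤ)):ℝ) * α) := by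
      have hba := bestApprox hα hirr l _ hm0 hmlt (round (((((n:ℤ) - x : ℤ)):ℝ) * α))
      rwa [abs_sub_round_eq_min] at hba
    linarith
  · -- f = fract ∘ neg
    have hcon' : Int.fract (-((x:ℝ)*α)) < Int.fract (-((n:ℝ)*α)) := hcon
    have hfn' : Int.fract (-((n:ℝ)*α)) = distNearInt ((n:ℝ)*α) := hfn
    have hfx : 0 < Int.fract (-((x:ℝ)*α)) := hxirr.neg.fract_pos
    have hmlt : |x - (n:ℤ)| < (cfQ α (l+1) : ℤ) := abs_lt.2 ⟨by omega, by omega⟩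
    have hm0 : x - (n:ℤ) ≠ 0 := by omega
    have h := dni_sub_le (-((n:ℝ)*α)) (-((x:ℝ)*α))
    have he : -((n:ℝ)*α) - -((x:ℝ)*α) = (((x - (n:ℤ) : ℤ)):ℝ) * α := by push_cast; ring
    rw [he, abs_of_pos (by linarith)] at h
    have hge : cfD α l ≤ distNearInt ((((x - (n:ℤ) : ℤ)):ℝ) * α) := by
      have hba := bestApprox hα hirr l _ hm0 hmlt (round ((((x - (n:ℤ) : ℤ)):ℝ) * α))
      rwa [abs_sub_round_eq_min] at hba
    linarith
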